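/- With T(σ,k) = (k² − σ²)Q(k/σ) − (kσ/√(2π))e^{−k²/(2σ²)} extended by T(σ,0) = −σ²/2, M even, α = M−1, ᾱ_k = α−(2k−1), α_k = α+(2k−1), and K = {2,4,…,2(M−1)}: ((M−1)/M)σ² + (2/M)Σ_{k∈K} T(σ,k) = σ² + (2/M)Σ_{k=1}^{M/2}[T(σ,ᾱ_k) + T(σ,α_k)], and the right-hand side equals Ψ^PAM(σ²). -/

import Mathlib

open MeasureTheory ProbabilityTheory

/-- Standard Gaussian tail function `Q(x) = P(Z > x)`. -/
noncomputable def gaussQ (x : ℝ) : ℝ := ((gaussianReal 0 1) (Set.Ioi x)).toReal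

/-- `T(σ,k)` extended by `T(σ,0) = −σ²/2` (consistent with `Q(0) = 1/2`). -/
noncomputable def Text (σ k : ℝ) : ℝ :=
  if k = 0 then -σ^2 / 2
  else (k^2 - σ^2) * gaussQ (k / σ) - (k * σ / Real.sqrt (2 * Real.pi)) * Real.exp (-k^2 / (2 * σ^2))

/-- The state-evolution MSE `Ψ^PAM` for `M`-PAM, as a function of `σ`. -/
noncomputable def PsiPAM (M : ℕ) (σ : ℝ) : ℝ :=
  (2 / (M:ℝ)) * ∑ k ∈ Finset.Icc 1 (M / 2),
    (σ^2
      + (((M:ℝ) - 1 - (2 * (k:ℝ) - 1))^2 - σ^2) * gaussQ (((M:ℝ) - 1 - (2 * (k:ℝ) - 1)) / σ)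
      + (((M:ℝ) - 1 + (2 * (k:ℝ) - 1))^2 - σ^2) * gaussQ (((M:ℝ) - 1 + (2 * (k:ℝ) - 1)) / σ)
      - (σ / Real.sqrt (2 * Real.pi)) *
          (((M:ℝ) - 1 - (2 * (k:ℝ) - 1)) * Real.exp (-((M:ℝ) - 1 - (2 * (k:ℝ) - 1))^2 / (2 * σ^2))
            + ((M:ℝ) - 1 + (2 * (k:ℝ) - 1)) * Real.exp (-((M:ℝ) - 1 + (2 * (k:ℝ) - 1))^2 / (2 * σ^2))))

lemma gaussQ_zero : gaussQ 0 = 1 / 2 := by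
  have h1 : (1 : NNReal) ≠ 0 := one_ne_zero
  set μ := gaussianReal 0 1 with hμ
  have hmap : μ.map (fun x : ℝ => (-1 : ℝ) * x) = μ := by
    rw [hμ]
    have := gaussianReal_map_const_mul (μ := 0) (v := 1) (-1 : ℝ)
    simpa using this
  have hsym : μ (Set.Iio 0) = μ (Set.Ioi 0) := by
    conv_rhs => rw [← hmap]
    rw [Measure.map_apply (by fun_prop) measurableSet_Ioi]
    congr 1
    ext x
    simp [Set.mem_preimage]
  have h0 : μ {(0:ℝ)} = 0 := by
    refine gaussianReal_absolutelyContinuous 0 h1 ?_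
    simp
  have hIci : μ (Set.Ici (0:ℝ)) = μ (Set.Ioi 0) := by
    refine le_antisymm ?_ (measure_mono Set.Ioi_subset_Ici_self)
    calc μ (Set.Ici (0:ℝ)) = μ (Set.Ioi 0 ∪ {0}) := by rw [Set.Ioi_union_left]
      _ ≤ μ (Set.Ioi 0) + μ {0} := measure_union_le _ _
      _ = μ (Set.Ioi 0) := by rw [h0, add_zero]
  have htot : μ (Set.Iio 0) + μ (Set.Ici 0) = 1 := by
    rw [← measure_union (Set.Iio_disjoint_Ici le_rfl) measurableSet_Ici,
      Set.Iio_union_Ici, measure_univ]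
  rw [hIci, hsym] at htot
  have hfin : μ (Set.Ioi (0:ℝ)) ≠ ⊤ := measure_ne_top _ _
  unfold gaussQ
  rw [← hμ]
  have := congrArg ENNReal.toReal htot
  rw [ENNReal.toReal_add hfin hfin, ENNReal.toReal_one] at this
  linarith

lemma Text_eq (σ x : ℝ) :
    Text σ x = (x^2 - σ^2) * gaussQ (x / σ)
      - (x * σ / Real.sqrt (2 * Real.pi)) * Real.exp (-x^2 / (2 * σ^2)) := by
  unfold Text
  split
  · next h =>
    subst h
    simp [gaussQ_zero]
    ring
  · rfl

/-- Index reshuffling: the stationarity expression of the box-relaxation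
objective equals `Ψ^PAM(σ²)`. Here `ᾱ_k = α − (2k−1)`, `α_k = α + (2k−1)`,
`α = M − 1`, and `K = {2, 4, …, 2(M−1)}`. -/
theorem box_sum_eq_psi_pam (M : ℕ) (hMe : Even M) (hM : 2 ≤ M) (σ : ℝ) (hσ : 0 < σ) :
    (((M:ℝ) - 1) / (M:ℝ) * σ^2
        + (2 / (M:ℝ)) * ∑ j ∈ Finset.Icc 1 (M - 1), Text σ (2 * (j:ℝ))
      = σ^2 + (2 / (M:ℝ)) * ∑ k ∈ Finset.Icc 1 (M / 2),
          (Text σ ((M:ℝ) - 1 - (2 * (k:ℝ) - 1)) + Text σ ((M:ℝ) - 1 + (2 * (k:ℝ) - 1)))) ∧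
    (σ^2 + (2 / (M:ℝ)) * ∑ k ∈ Finset.Icc 1 (M / 2),
          (Text σ ((M:ℝ) - 1 - (2 * (k:ℝ) - 1)) + Text σ ((M:ℝ) - 1 + (2 * (k:ℝ) - 1)))
      = PsiPAM M σ) := by
  obtain ⟨n, hn⟩ := hMe
  have hMn : M = 2 * n := by omega
  have hn1 : 1 ≤ n := by omega
  subst hMn
  have hhalf : 2 * n / 2 = n := by omega
  have hnR : (0:ℝ) < (n:ℝ) := by exact_mod_cast hn1
  -- The RHS sum splits into two sums, each reindexed
  have E1 : ∑ k ∈ Finset.Icc 1 n, Text σ (((2*n : ℕ):ℝ) - 1 - (2 * (k:ℝ) - 1))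
      = ∑ j ∈ Finset.Ico 0 n, Text σ (2 * (j:ℝ)) := by
    refine Finset.sum_nbij' (fun k => n - k) (fun j => n - j) ?_ ?_ ?_ ?_ ?_
    · intro k hk; simp only [Finset.mem_Icc] at hk; simp only [Finset.mem_Ico]; omega
    · intro j hj; simp only [Finset.mem_Ico] at hj; simp only [Finset.mem_Icc]; omega
    · intro k hk; simp only [Finset.mem_Icc] at hk; omega
    · intro j hj; simp only [Finset.mem_Ico] at hj; omega
    · intro k hk
      simp only [Finset.mem_Icc] at hk
      congr 1
      have : ((n - k : ℕ) : ℝ) = (n:ℝ) - (k:ℝ) := by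
        have : k ≤ n := hk.2
        push_cast [this]; ring
      rw [this]; push_cast; ring
  have E2 : ∑ k ∈ Finset.Icc 1 n, Text σ (((2*n : ℕ):ℝ) - 1 + (2 * (k:ℝ) - 1))
      = ∑ j ∈ Finset.Ico n (2*n), Text σ (2 * (j:ℝ)) := by
    refine Finset.sum_nbij' (fun k => n + k - 1) (fun j => j - n + 1) ?_ ?_ ?_ ?_ ?_
    · intro k hk; simp only [Finset.mem_Icc] at hk; simp only [Finset.mem_Ico]; omega
    · intro j hj; simp only [Finset.mem_Ico] at hj; simp only [Finset.mem_Icc]; omega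
    · intro k hk; simp only [Finset.mem_Icc] at hk; omega
    · intro j hj; simp only [Finset.mem_Ico] at hj; omega
    · intro k hk
      simp only [Finset.mem_Icc] at hk
      congr 1
      have : ((n + k - 1 : ℕ) : ℝ) = (n:ℝ) + (k:ℝ) - 1 := by
        have h1 : 1 ≤ n + k := by omega
        push_cast [h1]; ring
      rw [this]; push_cast; ring
  have Esplit : ∑ k ∈ Finset.Icc 1 n,
      (Text σ (((2*n : ℕ):ℝ) - 1 - (2 * (k:ℝ) - 1)) + Text σ (((2*n : ℕ):ℝ) - 1 + (2 * (k:ℝ) - 1)))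
      = ∑ j ∈ Finset.Ico 0 (2*n), Text σ (2 * (j:ℝ)) := by
    rw [Finset.sum_add_distrib, E1, E2,
      Finset.sum_Ico_consecutive _ (Nat.zero_le n) (by omega)]
  have Ezero : ∑ j ∈ Finset.Ico 0 (2*n), Text σ (2 * (j:ℝ))
      = Text σ 0 + ∑ j ∈ Finset.Icc 1 (2*n - 1), Text σ (2 * (j:ℝ)) := by
    have h1 : Finset.Icc 1 (2*n - 1) = Finset.Ico 1 (2*n) := by
      ext x; simp only [Finset.mem_Icc, Finset.mem_Ico]; omega
    rw [h1, Finset.sum_eq_sum_Ico_succ_bot (by omega : 0 < 2*n) (fun j => Text σ (2 * (j:ℝ)))]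
    norm_num
  have hT0 : Text σ 0 = -σ^2 / 2 := by unfold Text; simp
  have hS : ∑ k ∈ Finset.Icc 1 (2*n/2),
      (Text σ (((2*n : ℕ):ℝ) - 1 - (2 * (k:ℝ) - 1)) + Text σ (((2*n : ℕ):ℝ) - 1 + (2 * (k:ℝ) - 1)))
      = -σ^2 / 2 + ∑ j ∈ Finset.Icc 1 (2*n - 1), Text σ (2 * (j:ℝ)) := by
    rw [hhalf, Esplit, Ezero, hT0]
  constructor
  · rw [hS]
    have hMR : ((2*n : ℕ):ℝ) = 2 * (n:ℝ) := by push_cast; ring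
    rw [hMR]
    field_simp
    ring
  · -- second part
    rw [PsiPAM]
    rw [Finset.mul_sum, Finset.mul_sum]
    rw [← sub_eq_zero]
    have hcard : (Finset.Icc 1 (2*n/2)).card = n := by
      rw [hhalf, Nat.card_Icc]; omega
    have hterm : ∀ k ∈ Finset.Icc 1 (2*n/2),
        2 / ((2*n : ℕ):ℝ) *
          (σ^2
            + ((((2*n : ℕ):ℝ) - 1 - (2 * (k:ℝ) - 1))^2 - σ^2) * gaussQ ((((2*n : ℕ):ℝ) - 1 - (2 * (k:ℝ) - 1)) / σ)
            + ((((2*n : ℕ):ℝ) - 1 + (2 * (k:ℝ) - 1))^2 - σ^2) * gaussQ ((((2*n : ℕ):ℝ) - 1 + (2 * (k:ℝ) - 1)) / σ)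
            - (σ / Real.sqrt (2 * Real.pi)) *
              ((((2*n : ℕ):ℝ) - 1 - (2 * (k:ℝ) - 1)) * Real.exp (-(((2*n : ℕ):ℝ) - 1 - (2 * (k:ℝ) - 1))^2 / (2 * σ^2))
                + (((2*n : ℕ):ℝ) - 1 + (2 * (k:ℝ) - 1)) * Real.exp (-(((2*n : ℕ):ℝ) - 1 + (2 * (k:ℝ) - 1))^2 / (2 * σ^2))))
        = 2 / ((2*n : ℕ):ℝ) *
            (σ^2 + (Text σ (((2*n : ℕ):ℝ) - 1 - (2 * (k:ℝ) - 1)) + Text σ (((2*n : ℕ):ℝ) - 1 + (2 * (k:ℝ) - 1)))) := by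
      intro k _
      rw [Text_eq, Text_eq]
      ring
    rw [Finset.sum_congr rfl hterm]
    have hconst : ∑ k ∈ Finset.Icc 1 (2*n/2),
        2 / ((2*n : ℕ):ℝ) *
          (σ^2 + (Text σ (((2*n : ℕ):ℝ) - 1 - (2 * (k:ℝ) - 1)) + Text σ (((2*n : ℕ):ℝ) - 1 + (2 * (k:ℝ) - 1))))
        = ∑ k ∈ Finset.Icc 1 (2*n/2),
            (2 / ((2*n : ℕ):ℝ) * σ^2
              + 2 / ((2*n : ℕ):ℝ) * (Text σ (((2*n : ℕ):ℝ) - 1 - (2 * (k:ℝ) - 1)) + Text σ (((2*n : ℕ):ℝ) - 1 + (2 * (k:ℝ) - 1)))) := by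
      refine Finset.sum_congr rfl fun k _ => ?_; ring
    rw [hconst, Finset.sum_add_distrib, Finset.sum_const, hcard, nsmul_eq_mul]
    have hMR : ((2*n : ℕ):ℝ) = 2 * (n:ℝ) := by push_cast; ring
    have : (n:ℝ) * (2 / ((2*n : ℕ):ℝ) * σ^2) = σ^2 := by
      rw [hMR]; field_simp
    rw [this]
    ring
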